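/- Let K be a finite field, L a field extension of K of finite degree k ≥ 1, and regard L² as a 2k-dimensional K-vector space. Let S = {restrictScalars_K(l) : l a 1-dimensional L-subspace of L²} be the planar spread of the K-space L² obtained by field reduction. Let M ∈ GL(2, L) have irreducible characteristic polynomial over L and multiplicative order |L|² − 1, and set H̄ = ⟨M^{|L|−1}⟩, whose elements act K-linearly on L². Then for every U ∈ S, the stabilizer of U in H̄ (for this K-linear action on K-subspaces) is exactly {I₂, −I₂}. -/

import Mathlib

open Module

open Polynomial Matrix

section Aux

variable {L : Type*} [Field L]

lemma aux_zero_or_unit (M : Matrix (Fin 2) (Fin 2) L)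
    (hirr : Irreducible M.charpoly) (f : L[X]) :
    aeval M f = 0 ∨ IsUnit (aeval M f) := by
  by_cases hdvd : M.charpoly ∣ f
  · left
    obtain ⟨g, rfl⟩ := hdvd
    rw [_root_.map_mul, Matrix.aeval_self_charpoly, zero_mul]
  · right
    obtain ⟨a, b, hab⟩ := hirr.coprime_iff_not_dvd.mpr hdvd
    have h1 : aeval M b * aeval M f = 1 := by
      have := congrArg (aeval M) hab
      simpa [_root_.map_add, _root_.map_mul, Matrix.aeval_self_charpoly] using this
    have h2 : aeval M f * aeval M b = 1 := by
      rw [← _root_.map_mul, mul_comm, _root_.map_mul, h1]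
    exact ⟨⟨aeval M f, aeval M b, h2, h1⟩, rfl⟩

lemma aux_scalar (M : Matrix (Fin 2) (Fin 2) L) (hirr : Irreducible M.charpoly)
    (n : ℕ) (c : L) (v : Fin 2 → L) (hv : v ≠ 0) (h : (M ^ n) *ᵥ v = c • v) :
    M ^ n = c • 1 := by
  have he : aeval M (X ^ n - C c) = M ^ n - c • 1 := by
    simp [_root_.map_sub, _root_.map_pow, Algebra.algebraMap_eq_smul_one]
  have h0 : (M ^ n - c • (1 : Matrix (Fin 2) (Fin 2) L)) *ᵥ v = 0 := by
    rw [Matrix.sub_mulVec, h, Matrix.smul_mulVec, Matrix.one_mulVec, sub_self]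
  rcases aux_zero_or_unit M hirr (X ^ n - C c) with hz | hu
  · rw [he, sub_eq_zero] at hz
    exact hz
  · exfalso
    rw [he] at hu
    obtain ⟨u, hu'⟩ := hu
    apply hv
    have hv0 : ((u⁻¹ : (Matrix (Fin 2) (Fin 2) L)ˣ) : Matrix (Fin 2) (Fin 2) L) *ᵥ
        ((M ^ n - c • 1) *ᵥ v) = v := by
      rw [Matrix.mulVec_mulVec, ← hu', ← Units.val_mul, inv_mul_cancel, Units.val_one,
        Matrix.one_mulVec]
    rw [h0, Matrix.mulVec_zero] at hv0
    exact hv0.symm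

lemma aux_smul_one_inj (x y : L) (h : x • (1 : Matrix (Fin 2) (Fin 2) L) = y • 1) : x = y := by
  have := congrFun (congrFun h 0) 0
  simpa [Matrix.one_apply] using this

end Aux

/-- The planar spread of the `K`-vector space `L²` obtained by field reduction: the set of
`K`-subspaces arising as `restrictScalars K` of the `L`-lines of `L²`. -/
def fieldReductionSpread (K L : Type*) [Field K] [Field L] [Algebra K L] :
    Set (Submodule K (Fin 2 → L)) :=
  {U | ∃ l : Submodule L (Fin 2 → L), finrank L l = 1 ∧ U = l.restrictScalars K}

/-- The `K`-linear action of `A ∈ GL(2, L)` on `K`-subspaces of `L²`: `U · A` is the image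
of `U` under the (in particular `K`-linear) map given by the matrix `A`. -/
noncomputable def mapGLK (K : Type*) {L : Type*} [Field K] [Field L] [Algebra K L]
    (A : GL (Fin 2) L) (U : Submodule K (Fin 2 → L)) : Submodule K (Fin 2 → L) :=
  U.map (LinearMap.restrictScalars K (Matrix.toLin' (A : Matrix (Fin 2) (Fin 2) L)))

section MapGLK

variable {K L : Type*} [Field K] [Field L] [Algebra K L]

lemma mapGLK_one (U : Submodule K (Fin 2 → L)) : mapGLK K 1 U = U := by
  unfold mapGLK
  have h : ∀ y : Fin 2 → L,
      (LinearMap.restrictScalars K (Matrix.toLin' ((1 : GL (Fin 2) L) : Matrix (Fin 2) (Fin 2) L))) y = y := by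
    intro y
    simp [Matrix.toLin'_apply, Units.val_one, Matrix.one_mulVec]
  ext x
  simp only [Submodule.mem_map]
  constructor
  · rintro ⟨y, hy, rfl⟩
    rwa [h y]
  · intro hx
    exact ⟨x, hx, h x⟩

lemma mapGLK_neg_one (U : Submodule K (Fin 2 → L)) : mapGLK K (-1 : GL (Fin 2) L) U = U := by
  unfold mapGLK
  have h : ∀ y : Fin 2 → L,
      (LinearMap.restrictScalars K (Matrix.toLin' ((-1 : GL (Fin 2) L) : Matrix (Fin 2) (Fin 2) L))) y = -y := by
    intro y
    simp [Matrix.toLin'_apply, Matrix.neg_mulVec, Matrix.one_mulVec]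
  ext x
  simp only [Submodule.mem_map]
  constructor
  · rintro ⟨y, hy, rfl⟩
    rw [h y]
    exact neg_mem hy
  · intro hx
    exact ⟨-x, neg_mem hx, by rw [h (-x), neg_neg]⟩

lemma mapGLK_restrictScalars (A : GL (Fin 2) L) (l : Submodule L (Fin 2 → L)) :
    mapGLK K A (l.restrictScalars K)
      = (l.map (Matrix.toLin' (A : Matrix (Fin 2) (Fin 2) L))).restrictScalars K := by
  unfold mapGLK
  ext x
  simp [Submodule.mem_map, Submodule.restrictScalars_mem]

end MapGLK

/-- Let `K` be a finite field, `L/K` an extension of degree `k ≥ 1`, `S`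
the planar spread of the `K`-space `L²` by field reduction, `M ∈ GL(2, L)` a Singer cycle
and `H̄ = ⟨M^{|L|−1}⟩`. Then for every `U ∈ S`, the stabilizer of `U` in `H̄` (for the
`K`-linear action on `K`-subspaces) is exactly `{I₂, −I₂}`. -/

theorem stabilizer_spread_element_in_singer_subgroup
    {K L : Type*} [Field K] [Fintype K] [Field L] [Fintype L] [Algebra K L]
    (k : ℕ) (hk : 1 ≤ k) (hdeg : finrank K L = k)
    (M : GL (Fin 2) L)
    (hirr : Irreducible (Matrix.charpoly (M : Matrix (Fin 2) (Fin 2) L)))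
    (hord : orderOf M = Fintype.card L ^ 2 - 1) :
    ∀ U ∈ fieldReductionSpread K L,
      {A : GL (Fin 2) L |
          A ∈ Subgroup.zpowers (M ^ (Fintype.card L - 1)) ∧ mapGLK K A U = U}
        = {(1 : GL (Fin 2) L), -1} := by
  intro U hU
  obtain ⟨l, hl1, rfl⟩ := hU
  set q := Fintype.card L with hqdef
  have hq2 : 2 ≤ q := Fintype.one_lt_card
  set N : GL (Fin 2) L := M ^ (q - 1) with hN
  have hfac : q ^ 2 - 1 = (q - 1) * (q + 1) := by
    obtain ⟨r, hr⟩ : ∃ r, q = r + 1 := ⟨q - 1, by omega⟩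
    have h1 : (r + 1) ^ 2 = r * (r + 2) + 1 := by ring
    rw [hr]
    simp [h1]
  have hordN : orderOf N = q + 1 := by
    rw [hN, orderOf_pow, hord, hfac]
    have hg : Nat.gcd ((q - 1) * (q + 1)) (q - 1) = q - 1 :=
      Nat.gcd_eq_right ⟨q + 1, rfl⟩
    rw [hg, Nat.mul_div_cancel_left _ (by omega : 0 < q - 1)]
  have hNfin : IsOfFinOrder N := by
    rw [← orderOf_pos_iff, hordN]; omega
  -- the key computation: any element of ⟨N⟩ fixing l is a scalar ±1
  ext A
  simp only [Set.mem_setOf_eq, Set.mem_insert_iff, Set.mem_singleton_iff]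
  constructor
  · rintro ⟨hmem, hfix⟩
    obtain ⟨m, hm⟩ := hNfin.mem_powers_iff_mem_zpowers.mpr hmem
    replace hm : N ^ m = A := hm
    have hAval : (A : Matrix (Fin 2) (Fin 2) L) = (M : Matrix (Fin 2) (Fin 2) L) ^ ((q - 1) * m) := by
      rw [← hm, hN, ← pow_mul, Units.val_pow_eq_pow_val]
    -- eigenvector
    rw [mapGLK_restrictScalars] at hfix
    have hfix' : l.map (Matrix.toLin' (A : Matrix (Fin 2) (Fin 2) L)) = l :=
      Submodule.restrictScalars_injective K L _ hfix
    obtain ⟨v, hv0, hvgen⟩ := finrank_eq_one_iff'.mp hl1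
    have hfv : Matrix.toLin' (A : Matrix (Fin 2) (Fin 2) L) (v : Fin 2 → L) ∈ l := by
      have hmm : Matrix.toLin' (A : Matrix (Fin 2) (Fin 2) L) (v : Fin 2 → L)
          ∈ l.map (Matrix.toLin' (A : Matrix (Fin 2) (Fin 2) L)) :=
        Submodule.mem_map_of_mem v.2
      rwa [hfix'] at hmm
    obtain ⟨c, hc⟩ := hvgen ⟨_, hfv⟩
    have hc' : (A : Matrix (Fin 2) (Fin 2) L) *ᵥ (v : Fin 2 → L) = c • (v : Fin 2 → L) := by
      have := congrArg (Subtype.val) hc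
      rw [← Matrix.toLin'_apply]
      exact this.symm
    have hvne : (v : Fin 2 → L) ≠ 0 := fun h => hv0 (Subtype.ext h)
    have hscalar : (A : Matrix (Fin 2) (Fin 2) L) = c • 1 := by
      rw [hAval]
      exact aux_scalar _ hirr _ c _ hvne (by rw [← hAval]; exact hc')
    -- c ≠ 0
    have hc0 : c ≠ 0 := by
      rintro rfl
      have := A.isUnit
      rw [hscalar, zero_smul] at this
      exact not_isUnit_zero this
    have hcq1 : c ^ (q - 1) = 1 := FiniteField.pow_card_sub_one_eq_one c hc0
    have hAq : A ^ (q + 1) = 1 := by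
      apply orderOf_dvd_iff_pow_eq_one.mp
      rw [← hordN]
      exact orderOf_dvd_of_mem_zpowers hmem
    have hcq2 : c ^ (q + 1) = 1 := by
      have h1 : ((A ^ (q + 1) : GL (Fin 2) L) : Matrix (Fin 2) (Fin 2) L) = 1 := by
        rw [hAq, Units.val_one]
      rw [Units.val_pow_eq_pow_val, hscalar, _root_.smul_pow, one_pow] at h1
      exact aux_smul_one_inj _ _ (by rw [h1, one_smul])
    have hc2 : c ^ 2 = 1 := by
      have : c ^ (q + 1) = c ^ (q - 1) * c ^ 2 := by
        rw [← pow_add]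
        congr 1
        omega
      rw [hcq2, hcq1, one_mul] at this
      exact this.symm
    have : (c - 1) * (c + 1) = 0 := by linear_combination hc2
    rcases mul_eq_zero.mp this with h | h
    · left
      apply Units.ext
      rw [hscalar, sub_eq_zero.mp h, one_smul, Units.val_one]
    · right
      apply Units.ext
      rw [hscalar, Units.val_neg, Units.val_one, eq_neg_of_add_eq_zero_left h, neg_smul, one_smul]
  · -- reverse inclusion
    have hneg1 : (-1 : GL (Fin 2) L) ∈ Subgroup.zpowers N := by
      by_cases hch : (-1 : GL (Fin 2) L) = 1
      · rw [hch]; exact Subgroup.one_mem _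
      · have hL : (-1 : L) ≠ 1 := by
          intro h
          apply hch
          apply Units.ext
          rw [Units.val_neg, Units.val_one]
          calc -(1 : Matrix (Fin 2) (Fin 2) L) = (-1 : L) • 1 := by rw [neg_smul, one_smul]
            _ = (1 : L) • 1 := by rw [h]
            _ = 1 := one_smul _ _
        have hchar2 : ringChar L ≠ 2 := by
          intro h2
          apply hL
          have hcast : ((2 : ℕ) : L) = 0 := by
            rw [← h2]
            exact @CharP.cast_eq_zero L _ (ringChar L) (ringChar.charP L)
          push_cast at hcast
          linear_combination -hcast
        have hqodd : q % 2 = 1 := FiniteField.odd_card_of_char_ne_two hchar2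
        set s := (q + 1) / 2 with hs
        have hq1 : q + 1 = 2 * s := by omega
        set B : GL (Fin 2) L := N ^ s with hB
        have hB2 : B ^ 2 = 1 := by
          rw [hB, ← pow_mul, show s * 2 = q + 1 by omega, ← hordN, pow_orderOf_eq_one]
        have hBne : B ≠ 1 := by
          intro h1
          have hdvd := orderOf_dvd_of_pow_eq_one (hB ▸ h1)
          rw [hordN] at hdvd
          have hspos : 0 < s := by omega
          have := Nat.le_of_dvd hspos hdvd
          omega
        have hBval : (B : Matrix (Fin 2) (Fin 2) L)
            = (M : Matrix (Fin 2) (Fin 2) L) ^ ((q - 1) * s) := by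
          rw [hB, hN, ← pow_mul, Units.val_pow_eq_pow_val]
        have hfac2 : ((B : Matrix (Fin 2) (Fin 2) L) - 1) * ((B : Matrix (Fin 2) (Fin 2) L) + 1) = 0 := by
          have h2 : (B : Matrix (Fin 2) (Fin 2) L) ^ 2 = 1 := by
            rw [← Units.val_pow_eq_pow_val, hB2, Units.val_one]
          have expand : ((B : Matrix (Fin 2) (Fin 2) L) - 1) * ((B : Matrix (Fin 2) (Fin 2) L) + 1)
              = (B : Matrix (Fin 2) (Fin 2) L) ^ 2 - 1 := by noncomm_ring
          rw [expand, h2, sub_self]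
        have e1 : aeval (M : Matrix (Fin 2) (Fin 2) L) ((X : L[X]) ^ ((q - 1) * s) - 1)
            = (B : Matrix (Fin 2) (Fin 2) L) - 1 := by
          simp [_root_.map_sub, _root_.map_pow, hBval]
        have hu : IsUnit ((B : Matrix (Fin 2) (Fin 2) L) - 1) := by
          rcases aux_zero_or_unit _ hirr ((X : L[X]) ^ ((q - 1) * s) - 1) with h | h
          · exfalso
            rw [e1, sub_eq_zero] at h
            exact hBne (Units.ext (by rw [h, Units.val_one]))
          · rwa [e1] at h
        obtain ⟨u, hu'⟩ := hu
        have hB1 : (B : Matrix (Fin 2) (Fin 2) L) + 1 = 0 := by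
          have h3 := congrArg (fun y => ((u⁻¹ : (Matrix (Fin 2) (Fin 2) L)ˣ) : Matrix (Fin 2) (Fin 2) L) * y) hfac2
          simp only [← mul_assoc, ← hu', ← Units.val_mul, inv_mul_cancel, Units.val_one,
            one_mul, mul_zero] at h3
          exact h3
        have : B = -1 := by
          apply Units.ext
          rw [Units.val_neg, Units.val_one]
          exact eq_neg_of_add_eq_zero_left hB1
        rw [← this, hB]
        exact Subgroup.pow_mem _ (Subgroup.mem_zpowers N) s
    rintro (rfl | rfl)
    · exact ⟨Subgroup.one_mem _, mapGLK_one _⟩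
    · exact ⟨hneg1, mapGLK_neg_one _⟩
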